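/- arXiv:1701.06851 — 4 statements merged into one kernel-verified Lean document; each statement's English description precedes it below -/
import Mathlib

section
/- Let g, d, r be non-negative integers, k = r+1, k̄ = g−d+r ≥ 1, and ρ = g − k·k̄ ≥ 0. Suppose for i = 1,…,g we have vanishing sequences u_0(i) > ⋯ > u_r(i) ≥ 0 of integers with initial values u_s(0) = d − s and final values u_s(g) ≥ r − s, and for each i either (generic step) u_s(i) = u_s(i−1) − 1 for all s, or (special step) there exists t(i) with u_{t(i)}(i) = u_{t(i)}(i−1) and u_s(i) = u_s(i−1) − 1 for s ≠ t(i). If α denotes the number of generic steps, then α ≤ ρ. -/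
/-- Combinatorial dimension bound for limit linear series on a chain of `g`
elliptic curves.  Given vanishing sequences `u_0(i) > ⋯ > u_r(i) ≥ 0` with
`u_s(0) = d - s` and `u_s(g) ≥ r - s`, where each step `i ∈ {1, …, g}` is
either generic (all entries drop by `1`) or special (entry `t(i)` is fixed and
all other entries drop by `1`), the number `α` of generic steps satisfies
`α ≤ ρ = g - (r+1)(g-d+r)`. -/
theorem generic_steps_le_rho (g d r : ℕ)
    (hkbar : 1 ≤ (g : ℤ) - d + r)
    (hrho : 0 ≤ (g : ℤ) - (r + 1) * ((g : ℤ) - d + r))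
    (u : ℕ → ℕ → ℤ)
    (hdec : ∀ i ≤ g, ∀ s < r, u i (s + 1) < u i s)
    (hnonneg : ∀ i ≤ g, 0 ≤ u i r)
    (hinit : ∀ s ≤ r, u 0 s = (d : ℤ) - s)
    (hfinal : ∀ s ≤ r, (r : ℤ) - s ≤ u g s)
    (gen : ℕ → Bool) (t : ℕ → ℕ)
    (hstep : ∀ i, 1 ≤ i → i ≤ g →
      (gen i = true → ∀ s ≤ r, u i s = u (i - 1) s - 1) ∧
      (gen i = false → t i ≤ r ∧ u i (t i) = u (i - 1) (t i) ∧
        ∀ s ≤ r, s ≠ t i → u i s = u (i - 1) s - 1)) :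
    ((((Finset.Icc 1 g).filter fun i => gen i = true).card : ℤ))
      ≤ (g : ℤ) - (r + 1) * ((g : ℤ) - d + r) := by
  set S : ℕ → ℤ := fun i => ∑ s ∈ Finset.range (r + 1), u i s with hS
  have key : ∀ i ≤ g, S i = S 0 - r * i
      - ((Finset.Icc 1 i).filter fun j => gen j = true).card := by
    intro i hi
    induction i with
    | zero => simp
    | succ n ih =>
      have hn : n ≤ g := by omega
      have ihn := ih hn
      have hstep' := hstep (n + 1) (by omega) hi
      have hins : Finset.Icc 1 (n + 1) = insert (n + 1) (Finset.Icc 1 n) := by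
        ext x; simp [Finset.mem_Icc, Finset.mem_insert]; omega
      have hnotmem : (n + 1) ∉ Finset.Icc 1 n := by simp
      cases hg : gen (n + 1) with
      | true =>
        have h := hstep'.1 hg
        have hSn : S (n + 1) = S n - (r + 1) := by
          simp only [hS]
          rw [Finset.sum_congr rfl (fun s hs => by
            have := Finset.mem_range.mp hs
            simpa using h s (by omega))]
          rw [Finset.sum_sub_distrib]
          simp
        have hcard : ((Finset.Icc 1 (n + 1)).filter fun j => gen j = true).card
            = ((Finset.Icc 1 n).filter fun j => gen j = true).card + 1 := by
          rw [hins, Finset.filter_insert, if_pos hg,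
            Finset.card_insert_of_notMem (fun hmem => hnotmem (Finset.mem_of_mem_filter _ hmem))]
        rw [hSn, ihn, hcard]
        push_cast
        ring
      | false =>
        obtain ⟨htr, hteq, h⟩ := hstep'.2 hg
        have hSn : S (n + 1) = S n - r := by
          have hdiff : ∑ s ∈ Finset.range (r + 1), (u (n + 1) s - u n s + 1) = 1 := by
            rw [Finset.sum_eq_single (t (n + 1))]
            · have : u (n + 1) (t (n + 1)) = u n (t (n + 1)) := by simpa using hteq
              omega
            · intro s hs hst
              have := Finset.mem_range.mp hs
              have hh := h s (by omega) hst
              simp at hh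
              omega
            · intro habs
              exact absurd (Finset.mem_range.mpr (by omega)) habs
          simp only [hS]
          have : ∑ s ∈ Finset.range (r + 1), u (n + 1) s
              = ∑ s ∈ Finset.range (r + 1), (u n s - 1)
                + ∑ s ∈ Finset.range (r + 1), (u (n + 1) s - u n s + 1) := by
            rw [← Finset.sum_add_distrib]
            exact Finset.sum_congr rfl (fun s _ => by ring)
          rw [this, hdiff, Finset.sum_sub_distrib]
          simp
          ring
        have hcard : ((Finset.Icc 1 (n + 1)).filter fun j => gen j = true).card
            = ((Finset.Icc 1 n).filter fun j => gen j = true).card := by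
          rw [hins, Finset.filter_insert, if_neg (by simp [hg])]
        rw [hSn, ihn, hcard]
        push_cast
        ring
  have hkey := key g le_rfl
  have hS0 : S 0 = (r + 1) * d - ∑ s ∈ Finset.range (r + 1), (s : ℤ) := by
    simp only [hS]
    rw [Finset.sum_congr rfl (fun s hs => hinit s (by
      have := Finset.mem_range.mp hs; omega))]
    rw [Finset.sum_sub_distrib]
    simp [mul_comm]
  have hSg : (r + 1) * r - ∑ s ∈ Finset.range (r + 1), (s : ℤ) ≤ S g := by
    have : ∑ s ∈ Finset.range (r + 1), ((r : ℤ) - s) ≤ S g := by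
      apply Finset.sum_le_sum
      intro s hs
      exact hfinal s (by have := Finset.mem_range.mp hs; omega)
    rw [Finset.sum_sub_distrib] at this
    simpa [mul_comm] using this
  have hring : (g : ℤ) - (r + 1) * ((g : ℤ) - d + r)
      = (r + 1) * d - r * g - (r + 1) * r := by ring
  rw [hring]
  linarith
end

section
/- The assignment sending each valid sequence of special steps (t(i) for the g − ρ special indices i, placed so that an index i with special index t(i) is put in the first empty spot of column t(i)) produces a standard Young tableau of shape k × k̄ filled with k·k̄ distinct numbers from {1,…,g}: entries strictly increase down each column, and strictly increase left to right along each row. -/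
/-- `β_{i,s}`: the number of special steps `j ≤ i` with chosen column `t(j) = s`. -/
def specialCount (gen : ℕ → Bool) (t : ℕ → ℕ) (i s : ℕ) : ℕ :=
  ((Finset.Icc 1 i).filter fun j => gen j = false ∧ t j = s).card

lemma sc_mono (gen : ℕ → Bool) (t : ℕ → ℕ) {i j : ℕ} (s : ℕ) (h : i ≤ j) :
    specialCount gen t i s ≤ specialCount gen t j s :=
  Finset.card_le_card (Finset.filter_subset_filter _
    (Finset.Icc_subset_Icc_right h))

lemma sc_step (gen : ℕ → Bool) (t : ℕ → ℕ) {i : ℕ} (s : ℕ) (hi : 1 ≤ i) :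
    specialCount gen t i s =
      specialCount gen t (i-1) s + if gen i = false ∧ t i = s then 1 else 0 := by
  unfold specialCount
  have hins : Finset.Icc 1 i = insert i (Finset.Icc 1 (i-1)) := by
    ext x; simp only [Finset.mem_Icc, Finset.mem_insert]; omega
  have hnot : i ∉ Finset.Icc 1 (i-1) := by simp only [Finset.mem_Icc]; omega
  rw [hins, Finset.filter_insert]
  by_cases hc : gen i = false ∧ t i = s
  · rw [if_pos hc, if_pos hc, Finset.card_insert_of_notMem
      (fun h => hnot (Finset.mem_of_mem_filter _ h))]
  · rw [if_neg hc, if_neg hc]; omega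

lemma sc_special (gen : ℕ → Bool) (t : ℕ → ℕ) {i : ℕ} (hi : 1 ≤ i)
    (hg : gen i = false) :
    specialCount gen t i (t i) = specialCount gen t (i-1) (t i) + 1 := by
  rw [sc_step gen t (t i) hi, if_pos ⟨hg, rfl⟩]

lemma sc_inv (g r : ℕ) (gen : ℕ → Bool) (t : ℕ → ℕ)
    (hcond : ∀ i, 1 ≤ i → i ≤ g → gen i = false → 0 < t i →
      specialCount gen t (i - 1) (t i) < specialCount gen t (i - 1) (t i - 1)) :
    ∀ m, m ≤ g → ∀ s, 0 < s →
      specialCount gen t m s ≤ specialCount gen t m (s-1) := by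
  intro m
  induction m with
  | zero => intro _ s _; simp [specialCount]
  | succ n ih =>
    intro hm s hs
    have hn : n ≤ g := by omega
    rw [sc_step gen t s (by omega), sc_step gen t (s-1) (by omega)]
    simp only [Nat.add_sub_cancel]
    by_cases hgen : gen (n+1) = false
    · by_cases h1 : t (n+1) = s
      · have := hcond (n+1) (by omega) hm hgen (h1 ▸ hs)
        simp only [Nat.add_sub_cancel] at this
        rw [h1] at this
        rw [if_pos ⟨hgen, h1⟩]
        by_cases h2 : t (n+1) = s - 1
        · omega
        · rw [if_neg (fun h => h2 h.2)]; omega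
      · rw [if_neg (fun h => h1 h.2)]
        have := ih hn s hs
        by_cases h2 : t (n+1) = s - 1
        · rw [if_pos ⟨hgen, h2⟩]; omega
        · rw [if_neg (fun h => h2 h.2)]; omega
    · rw [if_neg (fun h => hgen h.1), if_neg (fun h => hgen h.1)]
      exact ih hn s hs

lemma sc_anti (g r : ℕ) (gen : ℕ → Bool) (t : ℕ → ℕ)
    (hcond : ∀ i, 1 ≤ i → i ≤ g → gen i = false → 0 < t i →
      specialCount gen t (i - 1) (t i) < specialCount gen t (i - 1) (t i - 1))
    {m s1 s2 : ℕ} (hm : m ≤ g) (h12 : s1 ≤ s2) :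
    specialCount gen t m s2 ≤ specialCount gen t m s1 := by
  induction s2, h12 using Nat.le_induction with
  | base => exact le_refl _
  | succ n hn ih =>
    have h := sc_inv g r gen t hcond m hm (n+1) (by omega)
    simp only [Nat.add_sub_cancel] at h
    exact le_trans h ih

/-- Placing each special step `i` (i.e. `gen i = false`, `1 ≤ i ≤ g`) in the
first empty spot of column `t(i)` — hence in row `β_{i,t(i)}` — of a tableau
with `k = r+1` columns and `k̄ = g - d + r` rows produces a standard Young
tableau of shape `k × k̄` filled with `k·k̄` distinct numbers from `{1, …, g}`:
the positions are distinct, entries strictly increase down each column, and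
strictly increase left to right along each row. -/
theorem produces_standard_young_tableau (g d r : ℕ)
    (hkbar : 1 ≤ (g : ℤ) - d + r)
    (gen : ℕ → Bool) (t : ℕ → ℕ)
    -- validity of the sequence of steps:
    (hcol : ∀ i, 1 ≤ i → i ≤ g → gen i = false → t i ≤ r)
    (hcond : ∀ i, 1 ≤ i → i ≤ g → gen i = false → 0 < t i →
      specialCount gen t (i - 1) (t i) < specialCount gen t (i - 1) (t i - 1))
    (hheight : ∀ s ≤ r, (specialCount gen t g s : ℤ) = (g : ℤ) - d + r) :
    -- distinct positions
    (∀ i j, 1 ≤ i → i ≤ g → gen i = false → 1 ≤ j → j ≤ g → gen j = false →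
      t i = t j → specialCount gen t i (t i) = specialCount gen t j (t j) → i = j) ∧
    -- entries strictly increase down each column
    (∀ i j, 1 ≤ i → i ≤ g → gen i = false → 1 ≤ j → j ≤ g → gen j = false →
      t i = t j → i < j →
      specialCount gen t i (t i) < specialCount gen t j (t j)) ∧
    -- entries strictly increase left to right along each row
    (∀ i j, 1 ≤ i → i ≤ g → gen i = false → 1 ≤ j → j ≤ g → gen j = false →
      specialCount gen t i (t i) = specialCount gen t j (t j) → t i < t j → i < j) := by
  have col : ∀ i j, 1 ≤ i → i ≤ g → gen i = false → 1 ≤ j → j ≤ g → gen j = false →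
      t i = t j → i < j →
      specialCount gen t i (t i) < specialCount gen t j (t j) := by
    intro i j hi1 hig hgi hj1 hjg hgj htij hij
    have h1 : specialCount gen t i (t i) ≤ specialCount gen t (j-1) (t i) :=
      sc_mono gen t _ (by omega)
    have h2 := sc_special gen t hj1 hgj
    rw [htij] at h1 ⊢
    omega
  refine ⟨?_, col, ?_⟩
  · intro i j hi1 hig hgi hj1 hjg hgj htij heq
    rcases lt_trichotomy i j with h | h | h
    · exact absurd heq (Nat.ne_of_lt (col i j hi1 hig hgi hj1 hjg hgj htij h))
    · exact h
    · exact absurd heq.symm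
        (Nat.ne_of_lt (col j i hj1 hjg hgj hi1 hig hgi htij.symm h))
  · intro i j hi1 hig hgi hj1 hjg hgj heq htij
    by_contra hns
    have hji : j < i := by
      rcases Nat.lt_or_ge j i with h | h
      · exact h
      · have : i = j := by omega
        subst this; omega
    have h1 : specialCount gen t j (t j) ≤ specialCount gen t j (t i) :=
      sc_anti g r gen t hcond hjg (le_of_lt htij)
    have h2 : specialCount gen t j (t i) ≤ specialCount gen t (i-1) (t i) :=
      sc_mono gen t _ (by omega)
    have h3 := sc_special gen t hi1 hgi
    omega
end

section
/- Let Γ be a single metric loop and P, Q two points on Γ such that the ratio of the lengths of the two arcs between P and Q is irrational (general position). Then for integers a ≠ b, the divisors aP + (d−a)Q and bP + (d−b)Q are not linearly equivalent on Γ. -/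
open Filter Set Topology

/-- `F` is affine with integer slope `mp` just to the right of `x` and with
integer slope `mm` just to the left of `x`. -/
def HasOneSidedSlopes (F : ℝ → ℝ) (x : ℝ) (mp mm : ℤ) : Prop :=
  (∀ᶠ y in nhdsWithin x (Set.Ioi x), F y = F x + mp * (y - x)) ∧
  (∀ᶠ y in nhdsWithin x (Set.Iio x), F y = F x + mm * (y - x))

/-- `D` is the divisor of the continuous piecewise linear function `F` (with
integer slopes) on the metric loop of circumference `L`, realized as `ℝ`
modulo `L` with points represented in `[0, L)`: at each point, `D` records the
sum of the incoming slopes of `F`. -/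
def IsPLDivisor (L : ℝ) (F : ℝ → ℝ) (D : ℝ →₀ ℤ) : Prop :=
  Continuous F ∧ Function.Periodic F L ∧
  (∀ p ∈ D.support, p ∈ Set.Ico 0 L) ∧
  ∀ x : ℝ, ∃ mp mm : ℤ, HasOneSidedSlopes F x mp mm ∧
    (x ∈ Set.Ico 0 L → D x = mm - mp)

/-- Two divisors on the metric loop of circumference `L` are linearly
equivalent if they differ by the divisor of a piecewise linear function with
integer slopes. -/
def LoopEquiv (L : ℝ) (D D' : ℝ →₀ ℤ) : Prop :=
  ∃ F : ℝ → ℝ, IsPLDivisor L F (D - D')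

/-- A divisor is effective if all its coefficients are nonnegative. -/
def EffectiveDiv (D : ℝ →₀ ℤ) : Prop := ∀ x, 0 ≤ D x

/-- The degree of a divisor. -/
def degDiv (D : ℝ →₀ ℤ) : ℤ := D.sum fun _ n => n

/-- An affine function has the expected derivative. -/
lemma hasDerivAt_affine (c x0 s x : ℝ) :
    HasDerivAt (fun y => c + s * (y - x0)) s x := by
  simpa using (((hasDerivAt_id x).sub_const x0).const_mul s).const_add c

/-- A function which is locally affine with integer slopes on an open interval
is globally affine on the closed interval (given continuity). -/
lemma affine_of_locally_affine (F : ℝ → ℝ) (p q : ℝ) (hpq : p < q)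
    (hF : ContinuousOn F (Set.Icc p q))
    (h : ∀ x ∈ Set.Ioo p q, ∃ s : ℤ, ∀ᶠ y in 𝓝 x, F y = F x + s * (y - x)) :
    ∃ s : ℤ, ∀ y ∈ Set.Icc p q, F y = F p + s * (y - p) := by
  choose! sl hsl using h
  have hder : ∀ x ∈ Set.Ioo p q, HasDerivAt F (sl x) x := by
    intro x hx
    exact (hasDerivAt_affine (F x) x (sl x) x).congr_of_eventuallyEq (hsl x hx)
  have key : ∀ x ∈ Set.Ioo p q, ∀ᶠ y in 𝓝 x, y ∈ Set.Ioo p q → sl y = sl x := by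
    intro x hx
    filter_upwards [(hsl x hx).eventually_nhds] with y hy hyI
    have h1 : HasDerivAt F (sl x) y :=
      (hasDerivAt_affine (F x) x (sl x) y).congr_of_eventuallyEq hy
    have h2 := hder y hyI
    exact_mod_cast h2.unique h1
  have hcont : ContinuousOn sl (Set.Ioo p q) := by
    intro x hx
    have hev : ∀ᶠ y in 𝓝[Set.Ioo p q] x, sl y = sl x := by
      filter_upwards [nhdsWithin_le_nhds (key x hx), self_mem_nhdsWithin] with y h1 h2
      exact h1 h2
    exact tendsto_const_nhds.congr' (hev.mono fun y hy => hy.symm)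
  have hc : (p + q) / 2 ∈ Set.Ioo p q := ⟨by linarith, by linarith⟩
  refine ⟨sl ((p + q) / 2), ?_⟩
  set s : ℝ := (sl ((p + q) / 2) : ℝ) with hs
  have hslc : ∀ x ∈ Set.Ioo p q, sl x = sl ((p + q) / 2) := fun x hx =>
    isPreconnected_Ioo.constant hcont hx hc
  have hGder : ∀ x ∈ interior (Set.Icc p q), HasDerivAt (fun y => F y - s * y) 0 x := by
    intro x hx
    rw [interior_Icc] at hx
    have h1 : HasDerivAt (fun y => F y - s * y) ((sl x : ℝ) - s * 1) x :=
      (hder x hx).sub ((hasDerivAt_id x).const_mul s)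
    have h2 : ((sl x : ℝ) - s * 1) = 0 := by rw [hslc x hx, hs]; ring
    rwa [h2] at h1
  have hGcont : ContinuousOn (fun y => F y - s * y) (Set.Icc p q) :=
    hF.sub ((continuous_const.mul continuous_id).continuousOn)
  have hdiff : DifferentiableOn ℝ (fun y => F y - s * y) (interior (Set.Icc p q)) :=
    fun x hx => (hGder x hx).differentiableAt.differentiableWithinAt
  have hmono := monotoneOn_of_deriv_nonneg (convex_Icc p q) hGcont hdiff
    (fun x hx => (hGder x hx).deriv.ge)
  have hanti := antitoneOn_of_deriv_nonpos (convex_Icc p q) hGcont hdiff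
    (fun x hx => (hGder x hx).deriv.le)
  intro y hy
  have hp : p ∈ Set.Icc p q := ⟨le_refl p, hpq.le⟩
  have h1 := hmono hp hy hy.1
  have h2 := hanti hp hy hy.1
  have h3 : F y - s * y = F p - s * p := le_antisymm h2 h1
  linear_combination h3

/-- On a metric loop with two points `P = 0` and `Q = ℓ` dividing it into arcs
of lengths `ℓ` and `m` with irrational ratio (general position), the divisors
`aP + (d-a)Q` and `bP + (d-b)Q` are not linearly equivalent for `a ≠ b`. -/
theorem loop_general_inequivalent (ℓ m : ℝ) (hl : 0 < ℓ) (hm : 0 < m)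
    (hirr : Irrational (ℓ / m)) (d a b : ℤ) (hab : a ≠ b) :
    ¬ LoopEquiv (ℓ + m)
        (Finsupp.single (0 : ℝ) a + Finsupp.single ℓ (d - a))
        (Finsupp.single (0 : ℝ) b + Finsupp.single ℓ (d - b)) := by
  rintro ⟨F, hcont, hper, hsupp, hspec⟩
  have hL : (0:ℝ) < ℓ + m := by linarith
  have hlL : ℓ < ℓ + m := by linarith
  set E : ℝ →₀ ℤ := (Finsupp.single (0 : ℝ) a + Finsupp.single ℓ (d - a)) -
      (Finsupp.single (0 : ℝ) b + Finsupp.single ℓ (d - b)) with hE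
  have hE0 : E 0 = a - b := by
    simp [hE, Finsupp.sub_apply, Finsupp.single_apply, hl.ne']
  have hEzero : ∀ x : ℝ, x ≠ 0 → x ≠ ℓ → E x = 0 := by
    intro x h0 hl'
    simp [hE, Finsupp.sub_apply, Finsupp.single_apply, Ne.symm h0, Ne.symm hl']
  have hloc : ∀ x : ℝ, x ∈ Set.Ico 0 (ℓ + m) → x ≠ 0 → x ≠ ℓ →
      ∃ s : ℤ, ∀ᶠ y in 𝓝 x, F y = F x + s * (y - x) := by
    intro x hx h0 hl'
    obtain ⟨mp, mm, ⟨hmp, hmm⟩, hD⟩ := hspec x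
    have hmme : mm = mp := by
      have := hD hx
      rw [hEzero x h0 hl'] at this
      omega
    rw [hmme] at hmm
    refine ⟨mp, ?_⟩
    rw [← nhdsNE_sup_pure x, ← nhdsLT_sup_nhdsGT x,
      eventually_sup, eventually_sup]
    exact ⟨⟨hmm, hmp⟩, by simp⟩
  obtain ⟨s1, hs1⟩ := affine_of_locally_affine F 0 ℓ hl hcont.continuousOn
    (fun x hx => hloc x ⟨hx.1.le, lt_trans hx.2 hlL⟩ (ne_of_gt hx.1) (ne_of_lt hx.2))
  obtain ⟨s2, hs2⟩ := affine_of_locally_affine F ℓ (ℓ + m) hlL hcont.continuousOn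
    (fun x hx => hloc x ⟨le_trans hl.le hx.1.le, hx.2⟩ (lt_trans hl hx.1).ne' (ne_of_gt hx.1))
  have hFL : F (ℓ + m) = F 0 := by simpa using hper 0
  have hFl : F ℓ = F 0 + s1 * ℓ := by simpa using hs1 ℓ ⟨hl.le, le_refl ℓ⟩
  have hsum : (s1:ℝ) * ℓ + s2 * m = 0 := by
    have h2 := hs2 (ℓ + m) ⟨by linarith, le_refl _⟩
    rw [hFL, hFl] at h2
    linear_combination -h2
  obtain ⟨mp, mm, ⟨hmp, hmm⟩, hD⟩ := hspec 0
  have hDc : mm - mp = a - b := by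
    have := hD ⟨le_refl 0, hL⟩
    rw [hE0] at this
    omega
  have hmps1 : mp = s1 := by
    have hev : ∀ᶠ y in 𝓝[>] (0:ℝ), (mp:ℝ) * y = s1 * y := by
      filter_upwards [hmp, Ioo_mem_nhdsGT_of_mem (left_mem_Ico.2 hl)] with y h1 h2
      have h3 := hs1 y ⟨h2.1.le, h2.2.le⟩
      linear_combination h3 - h1
    obtain ⟨y, hy1, hy2⟩ := (hev.and self_mem_nhdsWithin).exists
    have : (mp:ℝ) = s1 := mul_right_cancel₀ (ne_of_gt hy2) hy1
    exact_mod_cast this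
  have hmms2 : mm = s2 := by
    have hev : ∀ᶠ y in 𝓝[<] (0:ℝ), (mm:ℝ) * y = s2 * y := by
      have hm0 : (0:ℝ) ∈ Set.Ioc (-m) 0 := ⟨by linarith, le_refl 0⟩
      filter_upwards [hmm, Ioo_mem_nhdsLT_of_mem hm0] with y h1 h2
      have h4 : F (y + (ℓ + m)) = F ℓ + s2 * (y + (ℓ + m) - ℓ) :=
        hs2 (y + (ℓ + m)) ⟨by linarith [h2.1], by linarith [h2.2]⟩
      have h5 : F (y + (ℓ + m)) = F y := hper y
      linear_combination -h1 + h4 - h5 + hFl + hsum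
    obtain ⟨y, hy1, hy2⟩ := (hev.and self_mem_nhdsWithin).exists
    have : (mm:ℝ) = s2 := mul_right_cancel₀ (ne_of_lt hy2) hy1
    exact_mod_cast this
  have hne : s2 - s1 ≠ 0 := by omega
  have hs1ne : (s1:ℝ) ≠ 0 := by
    intro h
    have hs10 : s1 = 0 := by exact_mod_cast h
    have : (s2:ℝ) * m = 0 := by rw [h] at hsum; linarith
    have hs20 : (s2:ℝ) = 0 := by
      rcases mul_eq_zero.1 this with h' | h'
      · exact h'
      · exact absurd h' hm.ne'
    have : s2 = 0 := by exact_mod_cast hs20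
    omega
  apply hirr
  refine ⟨(-s2 : ℚ) / s1, ?_⟩
  have hmne : (m:ℝ) ≠ 0 := hm.ne'
  push_cast
  rw [div_eq_div_iff hs1ne hmne]
  linarith
end

section
/- In the tropical combinatorial model on a chain of g loops (each loop i contributes either ε_i = 0, or ε_i = 1 with x_i generic, or ε_i = 1 with x_i being t(i)-special), with initial vanishing (u_0(0),…,u_r(0)) = (u, u−1,…,u−r), d = u + Σε_i, and final vanishing u_t(g) ≥ r − t, the number α of loops with ε_i = 1 and x_i generic satisfies α ≤ ρ = g − (r+1)(g−d+r). -/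
/-- The tropical dimension bound on a chain of `g` loops.  Each loop `i`
contributes `ε_i = 0`, or `ε_i = 1` with `x_i` generic, or `ε_i = 1` with
`x_i` being `t(i)`-special; the vanishing orders evolve by the transition
rules of Corollary `sumanul`.  With initial vanishing
`(u_0(0), …, u_r(0)) = (u, u-1, …, u-r)`, `d = u + Σ ε_i`, and final vanishing
`u_t(g) ≥ r - t`, the number `α` of loops with `ε_i = 1` and `x_i` generic
satisfies `α ≤ ρ = g - (r+1)(g-d+r)`. -/
theorem tropical_generic_loops_le_rho (g d r : ℕ) (uu : ℕ) (hur : r ≤ uu)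
    (eps spec : ℕ → Bool) (t : ℕ → ℕ)
    (u : ℕ → ℕ → ℤ)
    (hinit : ∀ s ≤ r, u 0 s = (uu : ℤ) - s)
    (hd : (d : ℤ) = (uu : ℤ) + (((Finset.Icc 1 g).filter fun i => eps i = true).card : ℤ))
    (hdec : ∀ i ≤ g, ∀ s < r, u i (s + 1) < u i s)
    (hnonneg : ∀ i ≤ g, 0 ≤ u i r)
    (hfinal : ∀ s ≤ r, (r : ℤ) - s ≤ u g s)
    (hstep : ∀ i, 1 ≤ i → i ≤ g →
      -- (a) `ε_i = 0` and `u_r(i-1) > 0`: all orders drop by 1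
      (eps i = false → 0 < u (i - 1) r → ∀ s ≤ r, u i s = u (i - 1) s - 1) ∧
      -- (b) `ε_i = 0` and `u_r(i-1) = 0`: all drop by 1 except `u_r` stays
      (eps i = false → u (i - 1) r = 0 →
        (∀ s < r, u i s = u (i - 1) s - 1) ∧ u i r = u (i - 1) r) ∧
      -- `x_i` is `t(i)`-special
      (eps i = true → spec i = true → t i ≤ r ∧
        -- (d) special with a strict gap: `u_{t(i)}` increases by 1, others stay
        ((t i = 0 ∨ u (i - 1) (t i) + 1 < u (i - 1) (t i - 1)) →
          u i (t i) = u (i - 1) (t i) + 1 ∧ ∀ s ≤ r, s ≠ t i → u i s = u (i - 1) s) ∧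
        -- (c) special with `u_{t(i)}(i-1)+1 = u_{t(i)-1}(i-1)`: all stay
        ((0 < t i ∧ u (i - 1) (t i) + 1 = u (i - 1) (t i - 1)) →
          ∀ s ≤ r, u i s = u (i - 1) s)) ∧
      -- (e) `ε_i = 1` with `x_i` generic: all stay
      (eps i = true → spec i = false → ∀ s ≤ r, u i s = u (i - 1) s)) :
    ((((Finset.Icc 1 g).filter fun i => eps i = true ∧ spec i = false).card : ℤ))
      ≤ (g : ℤ) - (r + 1) * ((g : ℤ) - d + r) := by
  classical
  set N := Finset.range (r + 1) with hN
  -- one-step estimate on the total sum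
  have hstep' : ∀ i, 1 ≤ i → i ≤ g →
      ∑ s ∈ N, u i s ≤ ∑ s ∈ N, u (i - 1) s
        + (-(if eps i = false then (r : ℤ) else 0)
           + (if eps i = true ∧ spec i = true then 1 else 0)) := by
    intro i h1 hg
    obtain ⟨ha, hb, hc, he⟩ := hstep i h1 hg
    by_cases hε : eps i = true
    · by_cases hs : spec i = true
      · obtain ⟨htr, hd', hc'⟩ := hc hε hs
        simp only [hε, hs, Bool.true_eq_false, if_false, and_self, if_true, neg_zero, zero_add]
        by_cases hgap : t i = 0 ∨ u (i - 1) (t i) + 1 < u (i - 1) (t i - 1)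
        · obtain ⟨h1', h2'⟩ := hd' hgap
          have ht : t i ∈ N := by simp [hN]; omega
          have key : ∑ s ∈ N, u i s = (∑ s ∈ N, u (i - 1) s) + 1 := by
            rw [← Finset.sum_erase_add N _ ht, ← Finset.sum_erase_add N (u (i - 1)) ht, h1']
            have heq : ∑ s ∈ N.erase (t i), u i s = ∑ s ∈ N.erase (t i), u (i - 1) s := by
              refine Finset.sum_congr rfl fun s hs' => ?_
              simp only [Finset.mem_erase, hN, Finset.mem_range] at hs'
              exact h2' s (by omega) hs'.1
            rw [heq]; ring
          omega
        · push_neg at hgap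
          obtain ⟨ht0, hlt⟩ := hgap
          have htpos : 0 < t i := Nat.pos_of_ne_zero ht0
          have heq1 : u (i - 1) (t i) + 1 = u (i - 1) (t i - 1) := by
            have hh := hdec (i - 1) (by omega) (t i - 1) (by omega)
            have h2 : t i - 1 + 1 = t i := by omega
            rw [h2] at hh; omega
          have hall := hc' ⟨htpos, heq1⟩
          have key : ∑ s ∈ N, u i s = ∑ s ∈ N, u (i - 1) s := by
            refine Finset.sum_congr rfl fun s hs' => ?_
            simp only [hN, Finset.mem_range] at hs'
            exact hall s (by omega)
          omega
      · have hs' : spec i = false := by simpa using hs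
        have hall := he hε hs'
        simp only [hε, hs', Bool.true_eq_false, if_false, Bool.false_eq_true, and_false,
          neg_zero, zero_add, add_zero]
        have key : ∑ s ∈ N, u i s = ∑ s ∈ N, u (i - 1) s := by
          refine Finset.sum_congr rfl fun s hs'' => ?_
          simp only [hN, Finset.mem_range] at hs''
          exact hall s (by omega)
        omega
    · have hε' : eps i = false := by simpa using hε
      simp only [hε', if_true, Bool.false_eq_true, false_and, if_false, add_zero]
      rcases (hnonneg (i - 1) (by omega)).lt_or_eq with hlt | heq
      · have hall := ha hε' hlt
        have key : ∑ s ∈ N, u i s = (∑ s ∈ N, u (i - 1) s) - (r + 1) := by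
          have : ∑ s ∈ N, u i s = ∑ s ∈ N, (u (i - 1) s - 1) := by
            refine Finset.sum_congr rfl fun s hs'' => ?_
            simp only [hN, Finset.mem_range] at hs''
            exact hall s (by omega)
          rw [this, Finset.sum_sub_distrib]
          simp [hN]
        omega
      · obtain ⟨h1', h2'⟩ := hb hε' heq.symm
        have key : ∑ s ∈ N, u i s = (∑ s ∈ N, u (i - 1) s) - r := by
          rw [hN, Finset.sum_range_succ, Finset.sum_range_succ, h2']
          have : ∑ s ∈ Finset.range r, u i s = ∑ s ∈ Finset.range r, (u (i - 1) s - 1) := by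
            refine Finset.sum_congr rfl fun s hs'' => ?_
            simp only [Finset.mem_range] at hs''
            exact h1' s hs''
          rw [this, Finset.sum_sub_distrib]
          simp only [Finset.sum_const, Finset.card_range, nsmul_eq_mul, mul_one]
          ring
        omega
  -- cumulative estimate
  have main : ∀ i ≤ g, ∑ s ∈ N, u i s ≤ ∑ s ∈ N, u 0 s
      + ∑ j ∈ Finset.Icc 1 i, (-(if eps j = false then (r : ℤ) else 0)
          + (if eps j = true ∧ spec j = true then 1 else 0)) := by
    intro i
    induction i with
    | zero => intro _; simp
    | succ n ih =>
      intro h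
      rw [Finset.sum_Icc_succ_top (by omega : 1 ≤ n + 1)]
      have h1 := hstep' (n + 1) (by omega) h
      simp only [Nat.add_sub_cancel] at h1
      have h2 := ih (by omega)
      linarith
  have hmg := main g le_rfl
  -- split the Icc sum
  rw [Finset.sum_add_distrib, Finset.sum_neg_distrib] at hmg
  have hFsum : ∑ j ∈ Finset.Icc 1 g, (if eps j = false then (r : ℤ) else 0)
      = (r : ℤ) * (((Finset.Icc 1 g).filter fun j => eps j = false).card : ℤ) := by
    rw [← Finset.sum_filter, Finset.sum_const, nsmul_eq_mul, mul_comm]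
  have hBsum : ∑ j ∈ Finset.Icc 1 g, (if eps j = true ∧ spec j = true then (1 : ℤ) else 0)
      = (((Finset.Icc 1 g).filter fun j => eps j = true ∧ spec j = true).card : ℤ) := by
    rw [Finset.sum_boole]
  rw [hFsum, hBsum] at hmg
  -- initial and final sums
  have hS0 : ∑ s ∈ N, u 0 s = ∑ s ∈ N, ((uu : ℤ) - (s : ℤ)) := by
    refine Finset.sum_congr rfl fun s hs => ?_
    simp only [hN, Finset.mem_range] at hs
    exact hinit s (by omega)
  have hSg : ∑ s ∈ N, ((r : ℤ) - (s : ℤ)) ≤ ∑ s ∈ N, u g s := by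
    refine Finset.sum_le_sum fun s hs => ?_
    simp only [hN, Finset.mem_range] at hs
    exact hfinal s (by omega)
  have hdiff : ∑ s ∈ N, ((uu : ℤ) - (s : ℤ)) - ∑ s ∈ N, ((r : ℤ) - (s : ℤ))
      = ((r : ℤ) + 1) * ((uu : ℤ) - (r : ℤ)) := by
    rw [← Finset.sum_sub_distrib]
    simp only [sub_sub_sub_cancel_right, Finset.sum_const, Finset.card_range, hN,
      nsmul_eq_mul]
    push_cast; ring
  -- card identities
  have hsplit : ((Finset.Icc 1 g).filter fun j => eps j = true).card
      = ((Finset.Icc 1 g).filter fun j => eps j = true ∧ spec j = false).card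
        + ((Finset.Icc 1 g).filter fun j => eps j = true ∧ spec j = true).card := by
    have := Finset.card_filter_add_card_filter_not
      (s := (Finset.Icc 1 g).filter fun j => eps j = true) (p := fun j => spec j = true)
    rw [Finset.filter_filter, Finset.filter_filter] at this
    have h1 : ((Finset.Icc 1 g).filter fun j => eps j = true ∧ ¬spec j = true)
        = (Finset.Icc 1 g).filter fun j => eps j = true ∧ spec j = false := by
      apply Finset.filter_congr; intro j _; simp
    rw [h1] at this
    omega
  have hcompl : ((Finset.Icc 1 g).filter fun j => eps j = false).card
      + ((Finset.Icc 1 g).filter fun j => eps j = true).card = g := by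
    have := Finset.card_filter_add_card_filter_not
      (s := Finset.Icc 1 g) (p := fun j => eps j = true)
    have h1 : ((Finset.Icc 1 g).filter fun j => ¬eps j = true)
        = (Finset.Icc 1 g).filter fun j => eps j = false := by
      apply Finset.filter_congr; intro j _; simp
    rw [h1] at this
    have h2 : (Finset.Icc 1 g).card = g := by simp
    omega
  -- conclude
  have hmg2 : ∑ s ∈ N, ((r : ℤ) - (s : ℤ)) ≤ ∑ s ∈ N, ((uu : ℤ) - (s : ℤ))
      - (r : ℤ) * (((Finset.Icc 1 g).filter fun j => eps j = false).card : ℤ)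
      + (((Finset.Icc 1 g).filter fun j => eps j = true ∧ spec j = true).card : ℤ) := by
    rw [← hS0]; linarith
  have hβnn : (0 : ℤ) ≤ (((Finset.Icc 1 g).filter fun j => eps j = true ∧ spec j = true).card : ℤ) := by positivity
  have hs' : ((((Finset.Icc 1 g).filter fun j => eps j = true).card : ℤ))
      = (((Finset.Icc 1 g).filter fun j => eps j = true ∧ spec j = false).card : ℤ)
        + (((Finset.Icc 1 g).filter fun j => eps j = true ∧ spec j = true).card : ℤ) := by
    exact_mod_cast congrArg (Nat.cast : ℕ → ℤ) hsplit
  have hc' : (((Finset.Icc 1 g).filter fun j => eps j = false).card : ℤ)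
      + (((Finset.Icc 1 g).filter fun j => eps j = true).card : ℤ) = (g : ℤ) := by
    exact_mod_cast congrArg (Nat.cast : ℕ → ℤ) hcompl
  nlinarith [hmg2, hdiff, hd, hs', hc', hβnn]
end
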